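/- Let n ≥ 2 be an integer. Suppose (h_τ)_{τ>0} is a family of measurable functions on [0, l] and ε : (0,∞) → ℝ satisfies ε(τ) → 0 as τ → +∞, such that for all sufficiently large τ and all t ∈ [0, l], |h_τ(t) − e^{τt} Σ_{j=1}^{n−1} Q(t)^{j−1}/((j−1)!(2τ)^{j})| ≤ ε(τ) e^{τt}/τ^{n−1}. Then there exists ε′ : (0,∞) → ℝ with ε′(τ) → 0 as τ → +∞ such that for all sufficiently large τ and all x ∈ [0, l], |∫₀ˣ e^{−τt} q(t) h_τ(t) dt − Σ_{j=1}^{n−1} Q(x)^{j}/(j!(2τ)^{j})| ≤ ε′(τ)/τ^{n−1}. -/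

import Mathlib

open Real MeasureTheory Filter Finset intervalIntegral

lemma aux_int_mul_cont {l : ℝ} {q φ : ℝ → ℝ} {s : Set ℝ} (hs : MeasurableSet s)
    (hsub : s ⊆ Set.Icc 0 l) (hq : IntegrableOn q (Set.Icc 0 l))
    (hφ : ContinuousOn φ (Set.Icc 0 l)) :
    IntegrableOn (fun t => q t * φ t) s := by
  obtain ⟨C, hC⟩ := (isCompact_Icc).exists_bound_of_continuousOn hφ
  have hqs : IntegrableOn q s := hq.mono_set hsub
  have hm : AEStronglyMeasurable φ (volume.restrict s) :=
    (hφ.mono hsub).aestronglyMeasurable hs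
  have := Integrable.bdd_mul (c := C) hqs hm ?_
  · simpa [mul_comm, IntegrableOn] using this
  · filter_upwards [ae_restrict_mem hs] with t ht
    exact hC t (hsub ht)

lemma aux_byparts {l : ℝ} (f g : ℝ → ℝ)
    (hf : IntegrableOn f (Set.Icc 0 l)) (hg : IntegrableOn g (Set.Icc 0 l))
    (x : ℝ) (hx : x ∈ Set.Icc 0 l) :
    (∫ t in Set.Ioc 0 x, f t * ∫ s in Set.Ioc 0 t, g s)
      + ∫ t in Set.Ioc 0 x, g t * ∫ s in Set.Ioc 0 t, f s
      = (∫ t in Set.Ioc 0 x, f t) * ∫ s in Set.Ioc 0 x, g s := by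
  have hsub : Set.Ioc (0:ℝ) x ⊆ Set.Icc 0 l :=
    fun t ht => ⟨ht.1.le, ht.2.trans hx.2⟩
  have hfx : IntegrableOn f (Set.Ioc 0 x) := hf.mono_set hsub
  have hgx : IntegrableOn g (Set.Ioc 0 x) := hg.mono_set hsub
  -- Fubini step
  have key : (∫ t in Set.Ioc 0 x, f t * ∫ s in Set.Ioc t x, g s)
      = ∫ s in Set.Ioc 0 x, g s * ∫ t in Set.Ioc 0 s, f t := by
    have hT : Integrable (fun p : ℝ × ℝ =>
        Set.indicator {p : ℝ × ℝ | p.1 < p.2} (fun p => f p.1 * g p.2) p)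
        ((volume.restrict (Set.Ioc (0:ℝ) x)).prod (volume.restrict (Set.Ioc (0:ℝ) x))) := by
      refine (Integrable.mul_prod hfx hgx).indicator ?_
      exact measurableSet_lt measurable_fst measurable_snd
    have swap := MeasureTheory.integral_integral_swap
      (μ := volume.restrict (Set.Ioc (0:ℝ) x)) (ν := volume.restrict (Set.Ioc (0:ℝ) x))
      (f := fun t s => Set.indicator {p : ℝ × ℝ | p.1 < p.2}
        (fun p => f p.1 * g p.2) (t, s)) hT
    have L : (∫ t in Set.Ioc (0:ℝ) x, ∫ s in Set.Ioc (0:ℝ) x,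
        Set.indicator {p : ℝ × ℝ | p.1 < p.2} (fun p => f p.1 * g p.2) (t, s))
        = ∫ t in Set.Ioc 0 x, f t * ∫ s in Set.Ioc t x, g s := by
      refine setIntegral_congr_fun measurableSet_Ioc (fun t ht => ?_)
      have h1 : (fun s => Set.indicator {p : ℝ × ℝ | p.1 < p.2}
          (fun p => f p.1 * g p.2) (t, s))
          = Set.indicator (Set.Ioi t) (fun s => f t * g s) := by
        ext s
        by_cases hts : t < s <;> simp [Set.indicator_apply, hts]
      rw [h1, MeasureTheory.integral_indicator measurableSet_Ioi,
        Measure.restrict_restrict measurableSet_Ioi]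
      have h2 : Set.Ioi t ∩ Set.Ioc 0 x = Set.Ioc t x := by
        ext s
        constructor
        · rintro ⟨h1, _, h3⟩; exact ⟨h1, h3⟩
        · rintro ⟨h1, h2⟩; exact ⟨h1, ht.1.trans h1, h2⟩
      rw [h2, MeasureTheory.integral_const_mul]
    have R : (∫ s in Set.Ioc (0:ℝ) x, ∫ t in Set.Ioc (0:ℝ) x,
        Set.indicator {p : ℝ × ℝ | p.1 < p.2} (fun p => f p.1 * g p.2) (t, s))
        = ∫ s in Set.Ioc 0 x, g s * ∫ t in Set.Ioc 0 s, f t := by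
      refine setIntegral_congr_fun measurableSet_Ioc (fun s hs => ?_)
      have h1 : (fun t => Set.indicator {p : ℝ × ℝ | p.1 < p.2}
          (fun p => f p.1 * g p.2) (t, s))
          = Set.indicator (Set.Iio s) (fun t => f t * g s) := by
        ext t
        by_cases hts : t < s <;> simp [Set.indicator_apply, hts]
      rw [h1, MeasureTheory.integral_indicator measurableSet_Iio,
        Measure.restrict_restrict measurableSet_Iio]
      have h2 : Set.Iio s ∩ Set.Ioc 0 x = Set.Ioo 0 s := by
        ext t
        constructor
        · rintro ⟨h1, h2, _⟩; exact ⟨h2, h1⟩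
        · rintro ⟨h1, h2⟩; exact ⟨h2, h1, h2.le.trans hs.2⟩
      rw [h2, MeasureTheory.integral_mul_const, ← integral_Ioc_eq_integral_Ioo, mul_comm]
    rw [← L, swap, R]
  have hGcont : ContinuousOn (fun t => ∫ s in Set.Ioc 0 t, g s) (Set.Icc 0 l) :=
    intervalIntegral.continuousOn_primitive hg
  have hFcont : ContinuousOn (fun t => ∫ s in Set.Ioc 0 t, f s) (Set.Icc 0 l) :=
    intervalIntegral.continuousOn_primitive hf
  have hfG : IntegrableOn (fun t => f t * ∫ s in Set.Ioc 0 t, g s) (Set.Ioc 0 x) :=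
    aux_int_mul_cont measurableSet_Ioc hsub hf hGcont
  have hgF : IntegrableOn (fun t => g t * ∫ s in Set.Ioc 0 t, f s) (Set.Ioc 0 x) :=
    aux_int_mul_cont measurableSet_Ioc hsub hg hFcont
  have hfGx : IntegrableOn (fun t => f t * ∫ s in Set.Ioc 0 x, g s) (Set.Ioc 0 x) :=
    hfx.mul_const _
  have hsplit : ∀ t ∈ Set.Ioc (0:ℝ) x, (∫ s in Set.Ioc 0 x, g s)
      = (∫ s in Set.Ioc 0 t, g s) + ∫ s in Set.Ioc t x, g s := by
    intro t ht
    rw [← Set.Ioc_union_Ioc_eq_Ioc ht.1.le ht.2]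
    exact setIntegral_union (Set.Ioc_disjoint_Ioc_of_le le_rfl) measurableSet_Ioc
      (hg.mono_set (fun s hs => ⟨hs.1.le, hs.2.trans (ht.2.trans hx.2)⟩))
      (hg.mono_set (fun s hs => ⟨(ht.1.trans hs.1).le, hs.2.trans hx.2⟩))
  have hfH : IntegrableOn (fun t => f t * ∫ s in Set.Ioc t x, g s) (Set.Ioc 0 x) := by
    refine (hfGx.sub hfG).congr ?_
    filter_upwards [ae_restrict_mem measurableSet_Ioc] with t ht
    simp only [Pi.sub_apply]
    linear_combination (f t) * hsplit t ht
  have split : (∫ t in Set.Ioc 0 x, f t * ∫ s in Set.Ioc 0 x, g s)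
      = (∫ t in Set.Ioc 0 x, f t * ∫ s in Set.Ioc 0 t, g s)
        + ∫ t in Set.Ioc 0 x, f t * ∫ s in Set.Ioc t x, g s := by
    rw [← integral_add hfG hfH]
    refine setIntegral_congr_fun measurableSet_Ioc (fun t ht => ?_)
    linear_combination (f t) * hsplit t ht
  calc (∫ t in Set.Ioc 0 x, f t * ∫ s in Set.Ioc 0 t, g s)
      + ∫ t in Set.Ioc 0 x, g t * ∫ s in Set.Ioc 0 t, f s
      = (∫ t in Set.Ioc 0 x, f t * ∫ s in Set.Ioc 0 t, g s)
        + ∫ t in Set.Ioc 0 x, f t * ∫ s in Set.Ioc t x, g s := by rw [key]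
    _ = ∫ t in Set.Ioc 0 x, f t * ∫ s in Set.Ioc 0 x, g s := split.symm
    _ = (∫ t in Set.Ioc 0 x, f t) * ∫ s in Set.Ioc 0 x, g s := MeasureTheory.integral_mul_const _ _

lemma aux_pow_int {l : ℝ} (q : ℝ → ℝ) (hq : IntegrableOn q (Set.Icc 0 l)) :
    ∀ j : ℕ, ∀ x ∈ Set.Icc (0:ℝ) l,
      ∫ t in Set.Ioc 0 x, q t * (∫ s in Set.Ioc 0 t, q s) ^ j
        = (∫ s in Set.Ioc 0 x, q s) ^ (j + 1) / ((j : ℝ) + 1) := by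
  intro j
  induction j with
  | zero => intro x hx; simp
  | succ j ih =>
    intro x hx
    have hQcont : ContinuousOn (fun t => ∫ s in Set.Ioc 0 t, q s) (Set.Icc 0 l) :=
      intervalIntegral.continuousOn_primitive hq
    have hgint : IntegrableOn (fun t => q t * (∫ s in Set.Ioc 0 t, q s) ^ j)
        (Set.Icc 0 l) :=
      aux_int_mul_cont measurableSet_Icc subset_rfl hq (hQcont.pow j)
    have A := aux_byparts q (fun t => q t * (∫ s in Set.Ioc 0 t, q s) ^ j) hq hgint x hx
    have e1 : (∫ t in Set.Ioc 0 x, q t * ∫ s in Set.Ioc 0 t,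
          q s * (∫ u in Set.Ioc 0 s, q u) ^ j)
        = (∫ t in Set.Ioc 0 x, q t * (∫ s in Set.Ioc 0 t, q s) ^ (j + 1)) / ((j : ℝ) + 1) := by
      rw [← MeasureTheory.integral_div]
      refine setIntegral_congr_fun measurableSet_Ioc (fun t ht => ?_)
      rw [ih t ⟨ht.1.le, ht.2.trans hx.2⟩, mul_div_assoc]
    have e2 : (∫ t in Set.Ioc 0 x, (q t * (∫ s in Set.Ioc 0 t, q s) ^ j)
          * ∫ s in Set.Ioc 0 t, q s)
        = ∫ t in Set.Ioc 0 x, q t * (∫ s in Set.Ioc 0 t, q s) ^ (j + 1) := by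
      refine setIntegral_congr_fun measurableSet_Ioc (fun t ht => ?_)
      ring
    rw [e1, e2, ih x hx] at A
    have hc : (j : ℝ) + 1 ≠ 0 := by positivity
    have hc2 : (j : ℝ) + 1 + 1 ≠ 0 := by positivity
    push_cast
    rw [eq_div_iff hc2]
    field_simp at A
    linear_combination A

theorem induction_step (l : ℝ) (hl : 0 < l) (q : ℝ → ℝ)
    (hq : IntegrableOn q (Set.Icc 0 l)) (n : ℕ) (hn : 2 ≤ n)
    (h : ℝ → ℝ → ℝ)
    (hmeas : ∀ τ > (0:ℝ), AEMeasurable (h τ) (volume.restrict (Set.Icc 0 l)))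
    (ε : ℝ → ℝ) (hε : Tendsto ε atTop (nhds 0))
    (hexp : ∀ᶠ τ in atTop, ∀ t ∈ Set.Icc 0 l,
      |h τ t - Real.exp (τ * t) *
          ∑ j ∈ Finset.range (n - 1),
            (∫ s in (0:ℝ)..t, q s) ^ j / ((Nat.factorial j : ℝ) * (2 * τ) ^ (j + 1))| ≤
        ε τ * Real.exp (τ * t) / τ ^ (n - 1)) :
    ∃ ε' : ℝ → ℝ, Tendsto ε' atTop (nhds 0) ∧
      ∀ᶠ τ in atTop, ∀ x ∈ Set.Icc 0 l,
        |(∫ t in (0:ℝ)..x, Real.exp (-τ * t) * q t * h τ t) -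
            ∑ j ∈ Finset.Icc 1 (n - 1),
              (∫ t in (0:ℝ)..x, q t) ^ j / ((Nat.factorial j : ℝ) * (2 * τ) ^ j)| ≤
          ε' τ / τ ^ (n - 1) := by
  set C : ℝ := ∫ t in Set.Icc 0 l, |q t| with hCdef
  have hC0 : 0 ≤ C := setIntegral_nonneg measurableSet_Icc (fun t _ => abs_nonneg _)
  refine ⟨fun τ => |ε τ| * C, ?_, ?_⟩
  · have : Tendsto (fun τ => |ε τ| * C) atTop (nhds (|(0:ℝ)| * C)) := hε.abs.mul_const C
    simpa using this
  · filter_upwards [hexp, eventually_ge_atTop 1] with τ hτ hτ1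
    intro x hx
    have hτ0 : (0:ℝ) < τ := lt_of_lt_of_le one_pos hτ1
    have hx0 : (0:ℝ) ≤ x := hx.1
    have hsub : Set.Ioc (0:ℝ) x ⊆ Set.Icc 0 l := fun t ht => ⟨ht.1.le, ht.2.trans hx.2⟩
    have hqx : IntegrableOn q (Set.Ioc 0 x) := hq.mono_set hsub
    have hτpow : (0:ℝ) < τ ^ (n - 1) := pow_pos hτ0 _
    have hQcont : ContinuousOn (fun t => ∫ s in Set.Ioc 0 t, q s) (Set.Icc 0 l) :=
      intervalIntegral.continuousOn_primitive hq
    set S : ℝ → ℝ := fun t => ∑ j ∈ Finset.range (n - 1),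
      (∫ s in Set.Ioc 0 t, q s) ^ j / ((Nat.factorial j : ℝ) * (2 * τ) ^ (j + 1)) with hSdef
    have hScont : ContinuousOn S (Set.Icc 0 l) := by
      refine continuousOn_finset_sum _ (fun j _ => ?_)
      exact (hQcont.pow j).div_const _
    have hexp1 : ∀ t : ℝ, Real.exp (-τ * t) * Real.exp (τ * t) = 1 := by
      intro t
      rw [← Real.exp_add, show -τ * t + τ * t = 0 by ring, Real.exp_zero]
    set err : ℝ → ℝ := fun t => Real.exp (-τ * t) * q t * h τ t - q t * S t with herrdef
    have hqS_int : IntegrableOn (fun t => q t * S t) (Set.Ioc 0 x) :=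
      aux_int_mul_cont measurableSet_Ioc hsub hq hScont
    -- pointwise bound on the error
    have herr_bound : ∀ t ∈ Set.Ioc (0:ℝ) x, |err t| ≤ |q t| * (|ε τ| / τ ^ (n - 1)) := by
      intro t ht
      have ht' : t ∈ Set.Icc (0:ℝ) l := hsub ht
      have hb := hτ t ht'
      rw [intervalIntegral.integral_of_le ht'.1] at hb
      have herr_eq : err t = Real.exp (-τ * t) * q t * (h τ t - Real.exp (τ * t) * S t) := by
        simp only [herrdef]
        linear_combination (q t * S t) * hexp1 t
      rw [herr_eq, abs_mul, abs_mul, Real.abs_exp]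
      calc Real.exp (-τ * t) * |q t| * |h τ t - Real.exp (τ * t) * S t|
          ≤ Real.exp (-τ * t) * |q t| * (ε τ * Real.exp (τ * t) / τ ^ (n - 1)) := by
            exact mul_le_mul_of_nonneg_left hb (by positivity)
        _ = |q t| * (ε τ / τ ^ (n - 1)) * (Real.exp (-τ * t) * Real.exp (τ * t)) := by
            ring
        _ = |q t| * (ε τ / τ ^ (n - 1)) := by rw [hexp1 t, mul_one]
        _ ≤ |q t| * (|ε τ| / τ ^ (n - 1)) := by
            gcongr
            exact le_abs_self _
    -- integrability of the error
    have herr_int : IntegrableOn err (Set.Ioc 0 x) := by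
      refine Integrable.mono' (hqx.abs.mul_const (|ε τ| / τ ^ (n - 1))) ?_ ?_
      · have hmq : AEStronglyMeasurable q (volume.restrict (Set.Ioc 0 x)) :=
          hqx.aestronglyMeasurable
        have hmh : AEStronglyMeasurable (h τ) (volume.restrict (Set.Ioc 0 x)) :=
          ((hmeas τ hτ0).mono_measure (Measure.restrict_mono hsub le_rfl)).aestronglyMeasurable
        have hmexp : AEStronglyMeasurable (fun t => Real.exp (-τ * t))
            (volume.restrict (Set.Ioc 0 x)) :=
          (Real.continuous_exp.comp (continuous_const.mul continuous_id)).aestronglyMeasurable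
        exact ((hmexp.mul hmq).mul hmh).sub hqS_int.aestronglyMeasurable
      · filter_upwards [ae_restrict_mem measurableSet_Ioc] with t ht
        rw [Real.norm_eq_abs]
        exact herr_bound t ht
    -- split the integral
    have hsplit_int : (∫ t in Set.Ioc 0 x, Real.exp (-τ * t) * q t * h τ t)
        = (∫ t in Set.Ioc 0 x, q t * S t) + ∫ t in Set.Ioc 0 x, err t := by
      rw [← MeasureTheory.integral_add hqS_int herr_int]
      refine setIntegral_congr_fun measurableSet_Ioc (fun t ht => ?_)
      simp only [herrdef]
      ring
    -- value of the main term
    have hsum : (∫ t in Set.Ioc 0 x, q t * S t)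
        = ∑ j ∈ Finset.Icc 1 (n - 1),
            (∫ t in Set.Ioc 0 x, q t) ^ j / ((Nat.factorial j : ℝ) * (2 * τ) ^ j) := by
      have e0 : (∫ t in Set.Ioc 0 x, q t * S t)
          = ∑ j ∈ Finset.range (n - 1), ∫ t in Set.Ioc 0 x,
              (q t * (∫ s in Set.Ioc 0 t, q s) ^ j) / ((Nat.factorial j : ℝ) * (2 * τ) ^ (j + 1)) := by
        rw [← MeasureTheory.integral_finset_sum]
        · refine setIntegral_congr_fun measurableSet_Ioc (fun t ht => ?_)
          simp only [hSdef]
          rw [Finset.mul_sum]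
          refine Finset.sum_congr rfl (fun j _ => ?_)
          ring
        · intro j _
          exact (aux_int_mul_cont measurableSet_Ioc hsub hq (hQcont.pow j)).div_const
            ((Nat.factorial j : ℝ) * (2 * τ) ^ (j + 1))
      rw [e0]
      simp only [MeasureTheory.integral_div]
      have e1 : ∀ j ∈ Finset.range (n - 1),
          (∫ t in Set.Ioc 0 x, q t * (∫ s in Set.Ioc 0 t, q s) ^ j)
              / ((Nat.factorial j : ℝ) * (2 * τ) ^ (j + 1))
            = (∫ t in Set.Ioc 0 x, q t) ^ (j + 1)
              / ((Nat.factorial (j + 1) : ℝ) * (2 * τ) ^ (j + 1)) := by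
        intro j _
        rw [aux_pow_int q hq j x hx, Nat.factorial_succ, div_div]
        congr 1
        push_cast
        ring
      rw [Finset.sum_congr rfl e1]
      have : Finset.Icc 1 (n - 1) = Finset.Ico 1 ((n - 1) + 1) := by
        rw [Finset.Ico_add_one_right_eq_Icc]
      rw [this, Finset.sum_Ico_eq_sum_range]
      simp only [Nat.add_sub_cancel]
      refine Finset.sum_congr rfl (fun j _ => ?_)
      rw [Nat.add_comm 1 j]
    -- final estimate
    rw [intervalIntegral.integral_of_le hx0, intervalIntegral.integral_of_le hx0,
      hsplit_int, hsum, add_sub_cancel_left]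
    have hg_int : Integrable (fun t => |q t| * (|ε τ| / τ ^ (n - 1)))
        (volume.restrict (Set.Ioc 0 x)) := hqx.abs.mul_const _
    calc |∫ t in Set.Ioc 0 x, err t|
        ≤ ∫ t in Set.Ioc 0 x, |q t| * (|ε τ| / τ ^ (n - 1)) := by
          have hb2 : ∀ᵐ t ∂(volume.restrict (Set.Ioc 0 x)),
              ‖err t‖ ≤ |q t| * (|ε τ| / τ ^ (n - 1)) := by
            filter_upwards [ae_restrict_mem measurableSet_Ioc] with t ht
            rw [Real.norm_eq_abs]
            exact herr_bound t ht
          simpa [Real.norm_eq_abs] using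
            MeasureTheory.norm_integral_le_of_norm_le hg_int hb2
      _ = (∫ t in Set.Ioc 0 x, |q t|) * (|ε τ| / τ ^ (n - 1)) :=
          MeasureTheory.integral_mul_const _ _
      _ ≤ C * (|ε τ| / τ ^ (n - 1)) := by
          refine mul_le_mul_of_nonneg_right ?_ (by positivity)
          exact setIntegral_mono_set hq.abs
            (Filter.Eventually.of_forall (fun t => abs_nonneg _)) hsub.eventuallyLE
      _ = |ε τ| * C / τ ^ (n - 1) := by ring
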